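/- Let $1 \le q < s < \infty$ and define $s(q)'$ by $1/s(q)' + 1/s = 1/q$. If $(x_j) = (\lambda_j u_j)$ with $(\lambda_j) \in \ell_{s(q)'}$ and $(u_j)$ weakly $s$-summable in $X$, then $(x_j)$ is anisotropic $(s,q,s)$-summable and $\|(x_j)\|_{A(s,q,s)} \le \|(\lambda_j)\|_{s(q)'} \cdot \|(u_j)\|_{w,s}$. Consequently, every mixed $(s;q)$-summable sequence is anisotropic $(s,q,s)$-summable with $\|(x_j)\|_{A(s,q,s)} \le \|(x_j)\|_{m(s;q)}$. -/

import Mathlib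

open scoped BigOperators NNReal ENNReal

set_option maxHeartbeats 1000000
set_option synthInstance.maxHeartbeats 400000

noncomputable section

/-- `(xs k)` belongs to `ℓ_r(X*)`. -/
def MemLr (r : ℝ) {X : Type*} [NormedAddCommGroup X] [NormedSpace ℝ X]
    (xs : ℕ → X →L[ℝ] ℝ) : Prop :=
  Summable fun k => ‖xs k‖ ^ r

/-- The `ℓ_r(X*)` norm. -/
noncomputable def lrNorm (r : ℝ) {X : Type*} [NormedAddCommGroup X] [NormedSpace ℝ X]
    (xs : ℕ → X →L[ℝ] ℝ) : ℝ :=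
  (∑' k, ‖xs k‖ ^ r) ^ (1 / r)

/-- Weakly `q`-summable sequences. -/
def WeaklySummable (q : ℝ) {X : Type*} [NormedAddCommGroup X] [NormedSpace ℝ X]
    (x : ℕ → X) : Prop :=
  ∀ f : X →L[ℝ] ℝ, Summable fun j => |f (x j)| ^ q

/-- The weak `ℓ_q` norm. -/
noncomputable def weakNorm (q : ℝ) {X : Type*} [NormedAddCommGroup X] [NormedSpace ℝ X]
    (x : ℕ → X) : ℝ :=
  ⨆ f : {f : X →L[ℝ] ℝ // ‖f‖ ≤ 1}, (∑' j, |f.1 (x j)| ^ q) ^ (1 / q)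

/-- Anisotropic `(s,q,r)`-summable sequences. -/
def AnisoSummable (s q r : ℝ) {X : Type*} [NormedAddCommGroup X] [NormedSpace ℝ X]
    (x : ℕ → X) : Prop :=
  ∀ xs : ℕ → X →L[ℝ] ℝ, MemLr r xs →
    (∀ j, Summable fun k => |xs k (x j)| ^ s) ∧
      Summable fun j => (∑' k, |xs k (x j)| ^ s) ^ (q / s)

/-- The anisotropic `(s,q,r)` norm. -/
noncomputable def anisoNorm (s q r : ℝ) {X : Type*} [NormedAddCommGroup X] [NormedSpace ℝ X]
    (x : ℕ → X) : ℝ :=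
  ⨆ xs : {xs : ℕ → X →L[ℝ] ℝ // MemLr r xs ∧ lrNorm r xs ≤ 1},
    (∑' j, (∑' k, |xs.1 k (x j)| ^ s) ^ (q / s)) ^ (1 / q)

/-- The mixed `(s;q)` norm, as an infimum over factorizations. -/
noncomputable def mixedNormR (sq' s : ℝ) {X : Type*} [NormedAddCommGroup X] [NormedSpace ℝ X]
    (x : ℕ → X) : ℝ :=
  sInf {c : ℝ | ∃ lam : ℕ → ℝ, ∃ u : ℕ → X, (∀ j, x j = lam j • u j) ∧
    (Summable fun j => |lam j| ^ sq') ∧ WeaklySummable s u ∧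
    c = (∑' j, |lam j| ^ sq') ^ (1 / sq') * weakNorm s u}

section Helpers

variable {X : Type*} [NormedAddCommGroup X] [NormedSpace ℝ X]

lemma weak_bound {s : ℝ} (hs1 : 1 < s) {u : ℕ → X} (hu : WeaklySummable s u) :
    ∃ C : ℝ, 0 ≤ C ∧ ∀ f : X →L[ℝ] ℝ, ‖f‖ ≤ 1 → (∑' j, |f (u j)| ^ s) ^ (1 / s) ≤ C := by
  have hs : (0 : ℝ) < s := lt_trans one_pos hs1
  have hnn : ∀ (F : Finset ℕ) (f : X →L[ℝ] ℝ), (0 : ℝ) ≤ ∑ j ∈ F, |f (u j)| ^ s :=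
    fun F f => Finset.sum_nonneg fun j _ => Real.rpow_nonneg (abs_nonneg _) _
  let p : Finset ℕ → Seminorm ℝ (X →L[ℝ] ℝ) := fun F =>
    { toFun := fun f => (∑ j ∈ F, |f (u j)| ^ s) ^ (1 / s)
      map_zero' := by
        simp [Real.zero_rpow hs.ne', Real.zero_rpow (inv_ne_zero hs.ne')]
      add_le' := fun f g => by
        have h := Real.Lp_add_le F (fun j => f (u j)) (fun j => g (u j)) hs1.le
        simpa using h
      neg' := fun f => by simp
      smul' := fun a f => by
        simp only [ContinuousLinearMap.smul_apply, smul_eq_mul, abs_mul,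
          Real.mul_rpow (abs_nonneg a) (abs_nonneg _), ← Finset.mul_sum]
        rw [Real.mul_rpow (Real.rpow_nonneg (abs_nonneg a) _) (hnn F f), one_div,
          Real.rpow_rpow_inv (abs_nonneg a) hs.ne', Real.norm_eq_abs] }
  have hpf : ∀ F f, p F f = (∑ j ∈ F, |f (u j)| ^ s) ^ (1 / s) := fun F f => rfl
  have hple : ∀ F f, p F f ≤ (∑' j, |f (u j)| ^ s) ^ (1 / s) := by
    intro F f
    rw [hpf]
    exact Real.rpow_le_rpow (hnn F f)
      (Summable.sum_le_tsum F (fun j _ => Real.rpow_nonneg (abs_nonneg _) _) (hu f))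
      (le_of_lt (one_div_pos.mpr hs))
  have hbdd : BddAbove (Set.range p) := by
    rw [Seminorm.bddAbove_range_iff]
    intro f
    refine ⟨(∑' j, |f (u j)| ^ s) ^ (1 / s), ?_⟩
    rintro _ ⟨F, rfl⟩
    exact hple F f
  have hcont : ∀ F, Continuous (p F) := by
    intro F
    have h1 : Continuous fun f : X →L[ℝ] ℝ => (∑ j ∈ F, |f (u j)| ^ s) ^ (1 / s) := by
      refine (Real.continuous_rpow_const (le_of_lt (one_div_pos.mpr hs))).comp ?_
      refine continuous_finset_sum F fun j _ => ?_
      exact (Real.continuous_rpow_const hs.le).comp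
        ((ContinuousLinearMap.apply ℝ ℝ (u j)).continuous.abs)
    exact h1
  have hsupc : Continuous ((⨆ F, p F : Seminorm ℝ (X →L[ℝ] ℝ)) : (X →L[ℝ] ℝ) → ℝ) := by
    rw [Seminorm.coe_iSup_eq hbdd]
    exact Seminorm.continuous_iSup p hcont hbdd
  obtain ⟨C, hCpos, hC⟩ := Seminorm.bound_of_continuous_normedSpace _ hsupc
  refine ⟨C, hCpos.le, fun f hf => ?_⟩
  have hFle : ∀ F : Finset ℕ, (∑ j ∈ F, |f (u j)| ^ s) ≤ C ^ s := by
    intro F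
    have hb : BddAbove (Set.range fun F => p F f) := Seminorm.bddAbove_range_iff.mp hbdd f
    have h1 : p F f ≤ (⨆ F, p F : Seminorm ℝ (X →L[ℝ] ℝ)) f := by
      rw [Seminorm.coe_iSup_eq hbdd, iSup_apply]
      exact le_ciSup hb F
    have h2 : p F f ≤ C := by
      refine le_trans h1 (le_trans (hC f) ?_)
      calc C * ‖f‖ ≤ C * 1 := mul_le_mul_of_nonneg_left hf hCpos.le
        _ = C := mul_one _
    rw [hpf] at h2
    have h3 := Real.rpow_le_rpow (Real.rpow_nonneg (hnn F f) _) h2 hs.le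
    rwa [one_div, Real.rpow_inv_rpow (hnn F f) hs.ne'] at h3
  have h4 : (∑' j, |f (u j)| ^ s) ≤ C ^ s := Summable.tsum_le_of_sum_le (hu f) hFle
  have h5 := Real.rpow_le_rpow
    (tsum_nonneg fun j => Real.rpow_nonneg (abs_nonneg _) _) h4
    (le_of_lt (one_div_pos.mpr hs))
  rw [one_div, Real.rpow_rpow_inv hCpos.le hs.ne'] at h5
  rw [one_div]
  exact h5

lemma le_weakNorm {s : ℝ} (hs1 : 1 < s) {u : ℕ → X} (hu : WeaklySummable s u)
    (f : X →L[ℝ] ℝ) (hf : ‖f‖ ≤ 1) :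
    (∑' j, |f (u j)| ^ s) ^ (1 / s) ≤ weakNorm s u := by
  obtain ⟨C, _, hC⟩ := weak_bound hs1 hu
  have hbdd : BddAbove (Set.range fun g : {g : X →L[ℝ] ℝ // ‖g‖ ≤ 1} =>
      (∑' j, |g.1 (u j)| ^ s) ^ (1 / s)) := by
    refine ⟨C, ?_⟩
    rintro _ ⟨g, rfl⟩
    exact hC g.1 g.2
  exact le_ciSup hbdd (⟨f, hf⟩ : {g : X →L[ℝ] ℝ // ‖g‖ ≤ 1})

lemma weakNorm_nonneg' {s : ℝ} (hs1 : 1 < s) {u : ℕ → X} (hu : WeaklySummable s u) :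
    0 ≤ weakNorm s u := by
  have hs : (0 : ℝ) < s := lt_trans one_pos hs1
  have h0 := le_weakNorm hs1 hu 0 (by simp)
  have h1 : ((∑' j, |(0 : X →L[ℝ] ℝ) (u j)| ^ s) ^ (1 / s) : ℝ) = 0 := by
    simp [Real.zero_rpow hs.ne', Real.zero_rpow (inv_ne_zero hs.ne')]
  rwa [h1] at h0

lemma tsum_le_weakNorm {s : ℝ} (hs1 : 1 < s) {u : ℕ → X} (hu : WeaklySummable s u)
    (f : X →L[ℝ] ℝ) :
    (∑' j, |f (u j)| ^ s) ≤ weakNorm s u ^ s * ‖f‖ ^ s := by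
  have hs : (0 : ℝ) < s := lt_trans one_pos hs1
  have hW0 : 0 ≤ weakNorm s u := weakNorm_nonneg' hs1 hu
  rcases eq_or_ne f 0 with rfl | hf
  · have h1 : ∀ j, |(0 : X →L[ℝ] ℝ) (u j)| ^ s = 0 := fun j => by
      simp [Real.zero_rpow hs.ne']
    simp only [h1, tsum_zero]
    exact mul_nonneg (Real.rpow_nonneg hW0 _) (Real.rpow_nonneg (norm_nonneg _) _)
  · have hn : (0 : ℝ) < ‖f‖ := norm_pos_iff.mpr hf
    set g : X →L[ℝ] ℝ := ‖f‖⁻¹ • f with hg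
    have hgn : ‖g‖ ≤ 1 := by
      rw [hg, norm_smul (‖f‖⁻¹) f, norm_inv, norm_norm, inv_mul_cancel₀ hn.ne']
    have hkey := le_weakNorm hs1 hu g hgn
    have hgj : ∀ j, |g (u j)| ^ s = ‖f‖⁻¹ ^ s * |f (u j)| ^ s := fun j => by
      rw [hg]
      simp only [ContinuousLinearMap.smul_apply, smul_eq_mul, abs_mul, abs_inv, abs_norm]
      rw [Real.mul_rpow (inv_nonneg.mpr hn.le) (abs_nonneg _)]
    set S : ℝ := ∑' j, |f (u j)| ^ s with hS
    have hS0 : 0 ≤ S := tsum_nonneg fun j => Real.rpow_nonneg (abs_nonneg _) _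
    have h2 : (∑' j, |g (u j)| ^ s) = ‖f‖⁻¹ ^ s * S := by
      rw [tsum_congr hgj]
      exact tsum_mul_left
    rw [h2, Real.mul_rpow (Real.rpow_nonneg (inv_nonneg.mpr hn.le) _) hS0,
      one_div, Real.rpow_rpow_inv (inv_nonneg.mpr hn.le) hs.ne'] at hkey
    have h3 : S ^ s⁻¹ ≤ ‖f‖ * weakNorm s u := by
      have h4 := mul_le_mul_of_nonneg_left hkey hn.le
      rwa [← mul_assoc, mul_inv_cancel₀ hn.ne', one_mul] at h4
    have h5 := Real.rpow_le_rpow (Real.rpow_nonneg hS0 _) h3 hs.le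
    rwa [Real.rpow_inv_rpow hS0 hs.ne',
      Real.mul_rpow (norm_nonneg _) hW0, mul_comm] at h5

theorem aniso_key {s q sq' : ℝ} (hq : 1 ≤ q) (hqs : q < s)
    (hsq' : 1 / sq' + 1 / s = 1 / q)
    (x : ℕ → X) (lam : ℕ → ℝ) (u : ℕ → X)
    (hfac : ∀ j, x j = lam j • u j)
    (hlam : Summable fun j => |lam j| ^ sq') (hu : WeaklySummable s u) :
    AnisoSummable s q s x ∧
      anisoNorm s q s x ≤ (∑' j, |lam j| ^ sq') ^ (1 / sq') * weakNorm s u := by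
  have hq0 : (0 : ℝ) < q := lt_of_lt_of_le one_pos hq
  have hs1 : (1 : ℝ) < s := lt_of_le_of_lt hq hqs
  have hs0 : (0 : ℝ) < s := lt_trans one_pos hs1
  have hsq'inv : 0 < 1 / sq' := by
    have h1 : 1 / s < 1 / q := one_div_lt_one_div_of_lt hq0 hqs
    linarith
  have hsq'0 : 0 < sq' := one_div_pos.mp hsq'inv
  have hqsq' : q < sq' := by
    have hsinv : 0 < 1 / s := one_div_pos.mpr hs0
    have h1 : 1 / sq' < 1 / q := by linarith
    exact lt_of_one_div_lt_one_div hsq'0 h1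
  set W := weakNorm s u with hWdef
  have hW0 : 0 ≤ W := weakNorm_nonneg' hs1 hu
  set A := ∑' j, |lam j| ^ sq' with hAdef
  have hA0 : 0 ≤ A := tsum_nonneg fun j => Real.rpow_nonneg (abs_nonneg _) _
  have hpq : Real.HolderConjugate (sq' / q) (s / q) := by
    rw [Real.holderConjugate_iff]
    constructor
    · exact (one_lt_div hq0).mpr hqsq'
    · rw [inv_div, inv_div]
      have h2 : q / sq' + q / s = q * (1 / sq' + 1 / s) := by ring
      rw [h2, hsq', mul_one_div, div_self hq0.ne']
  have hmain : ∀ xs : ℕ → X →L[ℝ] ℝ, MemLr s xs →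
      (∀ j, Summable fun k => |xs k (x j)| ^ s) ∧
      (Summable fun j => (∑' k, |xs k (x j)| ^ s) ^ (q / s)) ∧
      ∑' j, (∑' k, |xs k (x j)| ^ s) ^ (q / s) ≤
        A ^ (q / sq') * (W ^ s * (∑' k, ‖xs k‖ ^ s)) ^ (q / s) := by
    intro xs hxs
    have hxs' : Summable fun k => ‖xs k‖ ^ s := hxs
    set T := ∑' k, ‖xs k‖ ^ s with hTdef
    have hT0 : 0 ≤ T := tsum_nonneg fun k => Real.rpow_nonneg (norm_nonneg _) _
    have hsum_u : ∀ j, Summable fun k => |xs k (u j)| ^ s := by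
      intro j
      refine Summable.of_nonneg_of_le (fun k => Real.rpow_nonneg (abs_nonneg _) _)
        (fun k => ?_) (hxs'.mul_left (‖u j‖ ^ s))
      have h1 : |xs k (u j)| ≤ ‖xs k‖ * ‖u j‖ := by
        simpa [Real.norm_eq_abs] using (xs k).le_opNorm (u j)
      calc |xs k (u j)| ^ s ≤ (‖xs k‖ * ‖u j‖) ^ s :=
            Real.rpow_le_rpow (abs_nonneg _) h1 hs0.le
        _ = ‖u j‖ ^ s * ‖xs k‖ ^ s := by
            rw [Real.mul_rpow (norm_nonneg _) (norm_nonneg _), mul_comm]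
    have hxrw : ∀ j k, |xs k (x j)| ^ s = |lam j| ^ s * |xs k (u j)| ^ s := by
      intro j k
      rw [hfac j, map_smul, smul_eq_mul, abs_mul,
        Real.mul_rpow (abs_nonneg _) (abs_nonneg _)]
    have hsum_x : ∀ j, Summable fun k => |xs k (x j)| ^ s := by
      intro j
      simp only [hxrw]
      exact (hsum_u j).mul_left _
    set τ : ℕ → ℝ := fun j => ∑' k, |xs k (u j)| ^ s with hτdef
    have hτ0 : ∀ j, 0 ≤ τ j := fun j =>
      tsum_nonneg fun k => Real.rpow_nonneg (abs_nonneg _) _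
    have htx : ∀ j, (∑' k, |xs k (x j)| ^ s) = |lam j| ^ s * τ j := by
      intro j
      simp only [hxrw]
      exact tsum_mul_left
    have hsqq : s * (q / s) = q := by field_simp
    have hσ : ∀ j, (∑' k, |xs k (x j)| ^ s) ^ (q / s) =
        |lam j| ^ q * τ j ^ (q / s) := by
      intro j
      rw [htx j, Real.mul_rpow (Real.rpow_nonneg (abs_nonneg _) _) (hτ0 j),
        ← Real.rpow_mul (abs_nonneg _), hsqq]
    have hτbdd : ∀ F : Finset ℕ, ∑ j ∈ F, τ j ≤ W ^ s * T := by
      intro F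
      have hswap : ∑ j ∈ F, τ j = ∑' k, ∑ j ∈ F, |xs k (u j)| ^ s :=
        (Summable.tsum_finsetSum fun j _ => hsum_u j).symm
      rw [hswap]
      have hle : ∀ k, ∑ j ∈ F, |xs k (u j)| ^ s ≤ W ^ s * ‖xs k‖ ^ s := by
        intro k
        calc ∑ j ∈ F, |xs k (u j)| ^ s
            ≤ ∑' j, |xs k (u j)| ^ s :=
              Summable.sum_le_tsum F (fun j _ => Real.rpow_nonneg (abs_nonneg _) _) (hu (xs k))
          _ ≤ W ^ s * ‖xs k‖ ^ s := tsum_le_weakNorm hs1 hu (xs k)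
      calc (∑' k, ∑ j ∈ F, |xs k (u j)| ^ s)
          ≤ ∑' k, W ^ s * ‖xs k‖ ^ s :=
            Summable.tsum_le_tsum hle (summable_sum fun j _ => hsum_u j) (hxs'.mul_left _)
        _ = W ^ s * T := tsum_mul_left
    have hτsum : Summable τ :=
      summable_of_sum_range_le (fun n => hτ0 n) (fun n => hτbdd (Finset.range n))
    have hτle : ∑' j, τ j ≤ W ^ s * T := Summable.tsum_le_of_sum_le hτsum hτbdd
    have hconv1 : ∀ j, (|lam j| ^ q) ^ (sq' / q) = |lam j| ^ sq' := by
      intro j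
      rw [← Real.rpow_mul (abs_nonneg _)]
      congr 1
      field_simp
    have hconv2 : ∀ j, (τ j ^ (q / s)) ^ (s / q) = τ j := by
      intro j
      rw [← Real.rpow_mul (hτ0 j)]
      rw [show q / s * (s / q) = 1 by field_simp, Real.rpow_one]
    obtain ⟨hHsum, hHle⟩ :=
      Real.summable_and_inner_le_Lp_mul_Lq_tsum_of_nonneg (f := fun j => |lam j| ^ q)
        (g := fun j => τ j ^ (q / s)) hpq
        (fun j => Real.rpow_nonneg (abs_nonneg _) _)
        (fun j => Real.rpow_nonneg (hτ0 j) _)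
        (by simp only [hconv1]; exact hlam)
        (by simp only [hconv2]; exact hτsum)
    have hσsum : Summable fun j => (∑' k, |xs k (x j)| ^ s) ^ (q / s) := by
      simp only [hσ]; exact hHsum
    refine ⟨hsum_x, hσsum, ?_⟩
    have h8 : ∑' j, (∑' k, |xs k (x j)| ^ s) ^ (q / s)
        = ∑' j, |lam j| ^ q * τ j ^ (q / s) := tsum_congr fun j => hσ j
    have e1 : (∑' j, (|lam j| ^ q) ^ (sq' / q)) = A := tsum_congr hconv1
    have e2 : (∑' j, (τ j ^ (q / s)) ^ (s / q)) = ∑' j, τ j := tsum_congr hconv2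
    rw [h8]
    refine le_trans hHle ?_
    rw [e1, e2, one_div_div, one_div_div]
    refine mul_le_mul_of_nonneg_left ?_ (Real.rpow_nonneg hA0 _)
    exact Real.rpow_le_rpow (tsum_nonneg hτ0) hτle (le_of_lt (div_pos hq0 hs0))
  constructor
  · intro xs hxs
    exact ⟨(hmain xs hxs).1, (hmain xs hxs).2.1⟩
  · unfold anisoNorm
    refine Real.iSup_le (fun xsp => ?_) (mul_nonneg (Real.rpow_nonneg hA0 _) hW0)
    obtain ⟨xs, hmem, hle1⟩ := xsp
    obtain ⟨-, -, hbound⟩ := hmain xs hmem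
    set T := ∑' k, ‖xs k‖ ^ s with hTdef
    have hT0 : 0 ≤ T := tsum_nonneg fun k => Real.rpow_nonneg (norm_nonneg _) _
    have hT1 : T ≤ 1 := by
      have h1 : T ^ (1 / s) ≤ 1 := hle1
      have h2 := Real.rpow_le_rpow (Real.rpow_nonneg hT0 _) h1 hs0.le
      rwa [one_div, Real.rpow_inv_rpow hT0 hs0.ne', Real.one_rpow] at h2
    have hσ0 : 0 ≤ ∑' j, (∑' k, |xs k (x j)| ^ s) ^ (q / s) :=
      tsum_nonneg fun j => Real.rpow_nonneg
        (tsum_nonneg fun k => Real.rpow_nonneg (abs_nonneg _) _) _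
    have step1 := Real.rpow_le_rpow hσ0 hbound (le_of_lt (one_div_pos.mpr hq0))
    have hWT0 : (0 : ℝ) ≤ W ^ s * T := mul_nonneg (Real.rpow_nonneg hW0 _) hT0
    have e3 : (A ^ (q / sq') * (W ^ s * T) ^ (q / s)) ^ (1 / q)
        = A ^ (1 / sq') * (W * T ^ (1 / s)) := by
      rw [Real.mul_rpow (Real.rpow_nonneg hA0 _) (Real.rpow_nonneg hWT0 _),
        ← Real.rpow_mul hA0, ← Real.rpow_mul hWT0,
        show q / sq' * (1 / q) = 1 / sq' by
          field_simp,
        show q / s * (1 / q) = 1 / s by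
          field_simp,
        Real.mul_rpow (Real.rpow_nonneg hW0 _) hT0,
        ← Real.rpow_mul hW0, show s * (1 / s) = 1 from mul_one_div_cancel hs0.ne',
        Real.rpow_one]
    rw [e3] at step1
    refine le_trans step1 ?_
    have h9 : W * T ^ (1 / s) ≤ W * 1 :=
      mul_le_mul_of_nonneg_left
        (Real.rpow_le_one hT0 hT1 (le_of_lt (one_div_pos.mpr hs0))) hW0
    calc A ^ (1 / sq') * (W * T ^ (1 / s))
        ≤ A ^ (1 / sq') * (W * 1) :=
          mul_le_mul_of_nonneg_left h9 (Real.rpow_nonneg hA0 _)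
      _ = A ^ (1 / sq') * W := by rw [mul_one]

end Helpers

theorem stmt10 {X : Type*} [NormedAddCommGroup X] [NormedSpace ℝ X] [CompleteSpace X]
    {s q sq' : ℝ} (hq : 1 ≤ q) (hqs : q < s) (hsq' : 1 / sq' + 1 / s = 1 / q)
    (x : ℕ → X) (lam : ℕ → ℝ) (u : ℕ → X)
    (hfac : ∀ j, x j = lam j • u j)
    (hlam : Summable fun j => |lam j| ^ sq') (hu : WeaklySummable s u) :
    AnisoSummable s q s x ∧
      anisoNorm s q s x ≤ (∑' j, |lam j| ^ sq') ^ (1 / sq') * weakNorm s u ∧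
        anisoNorm s q s x ≤ mixedNormR sq' s x := by
  obtain ⟨h1, h2⟩ := aniso_key hq hqs hsq' x lam u hfac hlam hu
  refine ⟨h1, h2, ?_⟩
  refine le_csInf ⟨_, lam, u, hfac, hlam, hu, rfl⟩ ?_
  rintro c ⟨lam', u', hfac', hlam', hu', rfl⟩
  exact (aniso_key hq hqs hsq' x lam' u' hfac' hlam' hu').2
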